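/- Let (X,d) be a compact metric space, f_{0,∞} = {f_n}_{n=0}^∞ a sequence of continuous self-maps of X, and n ≥ 2. If the induced system (𝓜(X), f̂_{0,∞}) is weakly mixing of order n, then (X, f_{0,∞}) is weakly mixing of order n. -/

import Mathlib

open MeasureTheory Filter
open scoped ENNReal

/-- `nacomp f n = f_{n-1} ∘ ⋯ ∘ f_0` (with `nacomp f 0 = id`): the time-`n` map of the
non-autonomous system `(X, f_{0,∞})`. -/
def nacomp {Y : Type*} (f : ℕ → Y → Y) : ℕ → Y → Y
  | 0 => id
  | n + 1 => f n ∘ nacomp f n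

/-- The induced pushforward map `f̂` on the space `𝓜(X)` of Borel probability measures,
equipped with the Lévy–Prokhorov metric. -/
noncomputable def inducedMap {X : Type*} [MetricSpace X] [MeasurableSpace X] [BorelSpace X]
    (f : X → X) (hf : Continuous f) :
    LevyProkhorov (ProbabilityMeasure X) → LevyProkhorov (ProbabilityMeasure X) :=
  fun μ => (LevyProkhorov.toMeasureEquiv (α := ProbabilityMeasure X)).symm
    (((LevyProkhorov.toMeasureEquiv (α := ProbabilityMeasure X)) μ).map hf.measurable.aemeasurable)

/-- Weak mixing of order `n` of the non-autonomous system given by the maps `f k`. -/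
def NAWeakMixingOrder {Y : Type*} [TopologicalSpace Y] (f : ℕ → Y → Y) (n : ℕ) : Prop :=
  ∀ U V : Fin n → Set Y, (∀ i, IsOpen (U i)) → (∀ i, IsOpen (V i)) →
    (∀ i, (U i).Nonempty) → (∀ i, (V i).Nonempty) →
    ∃ k, 1 ≤ k ∧ ∀ i, (nacomp f k '' U i ∩ V i).Nonempty

lemma nacomp_continuous {Y : Type*} [TopologicalSpace Y] (f : ℕ → Y → Y)
    (hf : ∀ n, Continuous (f n)) (k : ℕ) : Continuous (nacomp f k) := by
  induction k with
  | zero => exact continuous_id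
  | succ k ih => exact (hf k).comp ih

/-- The key identity: the `k`-th composition of induced maps is the pushforward under
`nacomp f k`. -/
lemma nacomp_inducedMap_eq {X : Type*} [MetricSpace X] [MeasurableSpace X] [BorelSpace X]
    (f : ℕ → X → X) (hf : ∀ n, Continuous (f n)) (k : ℕ)
    (μ : LevyProkhorov (ProbabilityMeasure X)) :
    ((LevyProkhorov.toMeasureEquiv (α := ProbabilityMeasure X)
        (nacomp (fun k => inducedMap (f k) (hf k)) k μ) : ProbabilityMeasure X) : Measure X)
      = ((LevyProkhorov.toMeasureEquiv (α := ProbabilityMeasure X) μ : ProbabilityMeasure X) : Measure X).map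
          (nacomp f k) := by
  induction k with
  | zero =>
    simp [nacomp, LevyProkhorov.toMeasureEquiv, Measure.map_id]
  | succ k ih =>
    have : nacomp (fun k => inducedMap (f k) (hf k)) (k + 1) μ
        = inducedMap (f k) (hf k) (nacomp (fun k => inducedMap (f k) (hf k)) k μ) := rfl
    rw [this]
    have h2 : ((LevyProkhorov.toMeasureEquiv (α := ProbabilityMeasure X)
        (inducedMap (f k) (hf k) (nacomp (fun k => inducedMap (f k) (hf k)) k μ)) :
        ProbabilityMeasure X) : Measure X)
      = ((LevyProkhorov.toMeasureEquiv (α := ProbabilityMeasure X)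
          (nacomp (fun k => inducedMap (f k) (hf k)) k μ) : ProbabilityMeasure X) :
          Measure X).map (f k) :=
      ProbabilityMeasure.toMeasure_map _ (hf k).measurable.aemeasurable
    rw [h2, ih,
      Measure.map_map (hf k).measurable (nacomp_continuous f hf k).measurable]
    rfl

/-- The set of probability measures giving an open set measure `> 1/2` is open. -/
lemma isOpen_half {X : Type*} [MetricSpace X] [CompactSpace X] [MeasurableSpace X] [BorelSpace X]
    {U : Set X} (hU : IsOpen U) :
    IsOpen {μ : ProbabilityMeasure X | (1/2 : ℝ≥0∞) < (μ : Measure X) U} := by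
  rw [← isClosed_compl_iff]
  have : {μ : ProbabilityMeasure X | (1/2 : ℝ≥0∞) < (μ : Measure X) U}ᶜ
      = {μ : ProbabilityMeasure X | (μ : Measure X) U ≤ 1/2} := by
    ext μ; simp [not_lt]
  rw [this]
  apply IsSeqClosed.isClosed
  intro μs μ hμs hlim
  have key := MeasureTheory.ProbabilityMeasure.le_liminf_measure_open_of_tendsto hlim hU
  refine key.trans ?_
  refine (liminf_le_limsup).trans ?_
  exact limsup_le_of_le (by isBoundedDefault) (Eventually.of_forall hμs)

/-- If the induced system `(𝓜(X), f̂_{0,∞})` is weakly mixing of order `n` (`n ≥ 2`), then so is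
`(X, f_{0,∞})`. -/
theorem weakMixingOrder_of_induced_weakMixingOrder
    {X : Type*} [MetricSpace X] [CompactSpace X] [MeasurableSpace X] [BorelSpace X]
    (f : ℕ → X → X) (hf : ∀ n, Continuous (f n)) (n : ℕ) (hn : 2 ≤ n)
    (h : NAWeakMixingOrder (fun k => inducedMap (f k) (hf k)) n) :
    NAWeakMixingOrder f n := by
  intro U V hUo hVo hUne hVne
  -- lift open sets to the measure space
  set e := LevyProkhorov.toMeasureEquiv (α := ProbabilityMeasure X)
  let lift : Set X → Set (LevyProkhorov (ProbabilityMeasure X)) :=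
    fun W => e ⁻¹' {μ : ProbabilityMeasure X | (1/2 : ℝ≥0∞) < (μ : Measure X) W}
  have hlift_open : ∀ W : Set X, IsOpen W → IsOpen (lift W) := by
    intro W hW
    exact (isOpen_half hW).preimage LevyProkhorov.continuous_toMeasure_probabilityMeasure
  have hlift_ne : ∀ W : Set X, IsOpen W → W.Nonempty → (lift W).Nonempty := by
    rintro W hWo ⟨x, hx⟩
    refine ⟨e.symm ⟨Measure.dirac x, inferInstance⟩, ?_⟩
    show (1/2 : ℝ≥0∞) < ((⟨Measure.dirac x, inferInstance⟩ : ProbabilityMeasure X) : Measure X) W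
    rw [show ((⟨Measure.dirac x, inferInstance⟩ : ProbabilityMeasure X) : Measure X)
      = Measure.dirac x from rfl]
    rw [Measure.dirac_apply' x hWo.measurableSet]
    rw [Set.indicator_of_mem hx]
    exact ENNReal.half_lt_self one_ne_zero ENNReal.one_ne_top
  obtain ⟨k, hk1, hk⟩ := h (fun i => lift (U i)) (fun i => lift (V i))
    (fun i => hlift_open _ (hUo i)) (fun i => hlift_open _ (hVo i))
    (fun i => hlift_ne _ (hUo i) (hUne i)) (fun i => hlift_ne _ (hVo i) (hVne i))
  refine ⟨k, hk1, fun i => ?_⟩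
  obtain ⟨ν, ⟨μ, hμU, hμmap⟩, hνV⟩ := hk i
  -- unpack
  have hμU' : (1/2 : ℝ≥0∞) < ((e μ : ProbabilityMeasure X) : Measure X) (U i) := hμU
  have hνV' : (1/2 : ℝ≥0∞) < ((e ν : ProbabilityMeasure X) : Measure X) (V i) := hνV
  rw [← hμmap] at hνV'
  rw [nacomp_inducedMap_eq f hf k μ] at hνV'
  rw [Measure.map_apply (nacomp_continuous f hf k).measurable (hVo i).measurableSet] at hνV'
  set m := ((e μ : ProbabilityMeasure X) : Measure X)
  have hinter : m (U i ∩ nacomp f k ⁻¹' V i) ≠ 0 := by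
    intro hzero
    have hsum := measure_union_add_inter (μ := m) (U i)
      (((hVo i).preimage (nacomp_continuous f hf k)).measurableSet)
    rw [hzero, add_zero] at hsum
    have h1 : m (U i) + m (nacomp f k ⁻¹' V i) ≤ 1 := by
      rw [← hsum]; exact prob_le_one
    have : (1 : ℝ≥0∞) < m (U i) + m (nacomp f k ⁻¹' V i) := by
      calc (1 : ℝ≥0∞) = 1/2 + 1/2 := by rw [ENNReal.add_halves]
      _ < m (U i) + m (nacomp f k ⁻¹' V i) :=
        ENNReal.add_lt_add hμU' hνV'
    exact absurd (this.trans_le h1) (lt_irrefl _)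
  obtain ⟨x, hxU, hxV⟩ := nonempty_of_measure_ne_zero hinter
  exact ⟨nacomp f k x, ⟨x, hxU, rfl⟩, hxV⟩
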